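/- Let α > 0, ω > 0 and β ≠ 0 with 2β² > α²ω². Then there exist ε₀ > 0 and functions I, θ : (0, ε₀) → ℝ such that for every ε ∈ (0, ε₀): I(ε) > ω²/2, the pair (I(ε), θ(ε)) satisfies the symmetric fixed-point equations (S) (so β sin θ(ε) < 0), and (I(ε) − ω²/2)/ε → √(2β² − α²ω²)/ω as ε → 0⁺. (This is the focus fixed point P_ε with expansion I₁ = ω²/2 + ε ω^{−1}√(2β² − α²ω²) + ⋯.) -/

import Mathlib

open Filter Topology

private lemma exists_angle (x y : ℝ) (hx : x ≠ 0) (h : x ^ 2 + y ^ 2 = 1) :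
    ∃ θ : ℝ, Real.cos θ = x ∧ Real.sin θ = y := by
  have hz : (⟨x, y⟩ : ℂ) ≠ 0 := by
    intro h0
    apply hx
    have := congrArg Complex.re h0
    simpa using this
  have habs : ‖(⟨x, y⟩ : ℂ)‖ = 1 := by
    rw [Complex.norm_def, Complex.normSq_mk]
    rw [show x * x + y * y = 1 by nlinarith]
    exact Real.sqrt_one
  refine ⟨Complex.arg ⟨x, y⟩, ?_, ?_⟩
  · rw [Complex.cos_arg hz, habs]; simp
  · rw [Complex.sin_arg, habs]; simp

set_option maxHeartbeats 1000000 in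
/-- Existence of the focus fixed point `P_ε`, with expansion
`I₁ = ω²/2 + ε ω⁻¹ √(2β² − α²ω²) + ⋯`. -/
theorem focus_Peps_exists
    (α ω β : ℝ) (hα : 0 < α) (hω : 0 < ω) (hβ : β ≠ 0)
    (h2β : α ^ 2 * ω ^ 2 < 2 * β ^ 2) :
    ∃ (ε₀ : ℝ) (_ : 0 < ε₀) (I θ : ℝ → ℝ),
      (∀ ε ∈ Set.Ioo (0 : ℝ) ε₀,
        ω ^ 2 / 2 < I ε ∧
        β * Real.cos (θ ε) = -(α * Real.sqrt (I ε)) ∧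
        ε * β * Real.sin (θ ε) = -(Real.sqrt (I ε) * (I ε - ω ^ 2 / 2)) ∧
        β * Real.sin (θ ε) < 0) ∧
      Tendsto (fun ε => (I ε - ω ^ 2 / 2) / ε) (𝓝[>] 0)
        (𝓝 (Real.sqrt (2 * β ^ 2 - α ^ 2 * ω ^ 2) / ω)) := by
  classical
  obtain ⟨c, hc⟩ : ∃ x : ℝ, x = ω ^ 2 / 2 := ⟨_, rfl⟩
  have hc0 : 0 < c := by rw [hc]; positivity
  have hβ2 : α ^ 2 * c < β ^ 2 := by rw [hc]; nlinarith
  obtain ⟨δ, hδdef⟩ : ∃ x : ℝ, x = (β ^ 2 - α ^ 2 * c) / (2 * α ^ 2) := ⟨_, rfl⟩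
  have hδ : 0 < δ := by rw [hδdef]; exact div_pos (by linarith) (by positivity)
  have hden : β ^ 2 - α ^ 2 * (c + δ) = (β ^ 2 - α ^ 2 * c) / 2 := by
    rw [hδdef]; field_simp; ring
  have hdenpos : 0 < β ^ 2 - α ^ 2 * (c + δ) := by rw [hden]; linarith
  have hdpos : ∀ x ∈ Set.Icc c (c + δ), 0 < β ^ 2 - α ^ 2 * x := by
    intro x hx
    have := hx.2
    nlinarith [sq_nonneg α]
  -- the auxiliary functions
  obtain ⟨g, hg⟩ : ∃ g : ℝ → ℝ, g = fun I => I * (I - c) ^ 2 / (β ^ 2 - α ^ 2 * I) := ⟨_, rfl⟩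
  obtain ⟨F, hF⟩ : ∃ F : ℝ → ℝ, F = fun x => Real.sqrt ((β ^ 2 - α ^ 2 * x) / x) := ⟨_, rfl⟩
  have hgtop : 0 < g (c + δ) := by
    have h1 : 0 < (c + δ) * (c + δ - c) ^ 2 := by
      rw [show c + δ - c = δ by ring]; positivity
    rw [hg]
    exact div_pos h1 hdenpos
  obtain ⟨ε₀, hε₀⟩ : ∃ x : ℝ, x = Real.sqrt (g (c + δ)) := ⟨_, rfl⟩
  have hε₀pos : 0 < ε₀ := by rw [hε₀]; exact Real.sqrt_pos.mpr hgtop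
  obtain ⟨K, hK⟩ : ∃ x : ℝ, x = Real.sqrt (β ^ 2 / c) := ⟨_, rfl⟩
  have hK0 : 0 < K := by rw [hK]; exact Real.sqrt_pos.mpr (by positivity)
  have hK2 : K ^ 2 = β ^ 2 / c := by rw [hK]; exact Real.sq_sqrt (by positivity)
  -- the key existence statement
  have key : ∀ ε : ℝ, ∃ I θ : ℝ, ε ∈ Set.Ioo (0 : ℝ) ε₀ →
      c < I ∧ I ≤ c + ε * K ∧
      β * Real.cos θ = -(α * Real.sqrt I) ∧
      ε * β * Real.sin θ = -(Real.sqrt I * (I - c)) ∧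
      β * Real.sin θ < 0 ∧
      (I - c) / ε = F I := by
    intro ε
    by_cases hε : ε ∈ Set.Ioo (0 : ℝ) ε₀
    swap
    · exact ⟨c, 0, fun h => absurd h hε⟩
    obtain ⟨hε0, hεε⟩ := hε
    rw [hε₀] at hεε
    -- IVT to find I
    have hcont : ContinuousOn g (Set.Icc c (c + δ)) := by
      rw [hg]
      apply ContinuousOn.div (by fun_prop) (by fun_prop)
      intro x hx; exact (hdpos x hx).ne'
    have hsub := intermediate_value_Ioc (by linarith : c ≤ c + δ) hcont
    have hgc : g c = 0 := by rw [hg]; simp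
    have hmem : ε ^ 2 ∈ Set.Ioc (g c) (g (c + δ)) :=
      ⟨by rw [hgc]; positivity, le_of_lt ((Real.lt_sqrt hε0.le).mp hεε)⟩
    obtain ⟨I, ⟨hIc, hIcδ⟩, hgI⟩ := hsub hmem
    have hI0 : 0 < I := lt_trans hc0 hIc
    have hd : 0 < β ^ 2 - α ^ 2 * I := hdpos I ⟨hIc.le, hIcδ⟩
    have hg' : I * (I - c) ^ 2 = ε ^ 2 * (β ^ 2 - α ^ 2 * I) := by
      rw [hg] at hgI
      simp only at hgI
      rw [div_eq_iff (ne_of_gt (by linarith))] at hgI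
      linear_combination hgI
    have hs : Real.sqrt I ^ 2 = I := Real.sq_sqrt hI0.le
    have hs0 : 0 < Real.sqrt I := Real.sqrt_pos.mpr hI0
    -- sum of squares
    have hsum : (-(α * Real.sqrt I) / β) ^ 2 + (-(Real.sqrt I * (I - c)) / (ε * β)) ^ 2 = 1 := by
      field_simp
      linear_combination (α ^ 2 * ε ^ 2 + (I - c) ^ 2) * hs + hg'
    have hxne : -(α * Real.sqrt I) / β ≠ 0 := by
      apply div_ne_zero _ hβ
      have : 0 < α * Real.sqrt I := by positivity
      intro h; rw [neg_eq_zero] at h; linarith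
    obtain ⟨θ, hcos, hsin⟩ := exists_angle _ _ hxne hsum
    refine ⟨I, θ, fun _ => ⟨hIc, ?_, ?_, ?_, ?_, ?_⟩⟩
    · -- I ≤ c + ε * K
      have h1 : (I - c) ^ 2 * I ≤ ε ^ 2 * β ^ 2 := by
        nlinarith [mul_nonneg (mul_nonneg (sq_nonneg ε) (sq_nonneg α)) hI0.le]
      have hsq : (I - c) ^ 2 ≤ (ε * K) ^ 2 := by
        have h2 : (ε * K) ^ 2 = ε ^ 2 * β ^ 2 / c := by rw [mul_pow, hK2]; ring
        rw [h2, le_div_iff₀ hc0]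
        nlinarith [sq_nonneg (I - c)]
      nlinarith [mul_pos hε0 hK0, hsq]
    · rw [hcos]; field_simp
    · rw [hsin]; field_simp
    · rw [hsin]
      have h1 : 0 < Real.sqrt I * (I - c) := mul_pos hs0 (by linarith)
      have h2 : β * (-(Real.sqrt I * (I - c)) / (ε * β)) = -(Real.sqrt I * (I - c) / ε) := by
        field_simp
      rw [h2]
      exact neg_neg_iff_pos.mpr (div_pos h1 hε0)
    · -- the ratio equation
      have hratio : ((I - c) / ε) ^ 2 = (β ^ 2 - α ^ 2 * I) / I := by
        rw [div_pow]
        field_simp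
        linear_combination hg'
      have hnn : 0 ≤ (I - c) / ε := div_nonneg (by linarith) hε0.le
      rw [hF]
      simp only
      rw [← hratio, Real.sqrt_sq hnn]
  choose Ifun θfun hspec using key
  rw [hc] at hspec
  refine ⟨ε₀, hε₀pos, Ifun, θfun, ?_, ?_⟩
  · intro ε hε
    obtain ⟨h1, _, h3, h4, h5, _⟩ := hspec ε hε
    exact ⟨h1, h3, h4, h5⟩
  · -- Tendsto
    have hIoo : Set.Ioo (0 : ℝ) ε₀ ∈ 𝓝[>] (0 : ℝ) :=
      Ioo_mem_nhdsGT_of_mem ⟨le_refl 0, hε₀pos⟩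
    have hIc_tendsto : Tendsto Ifun (𝓝[>] (0 : ℝ)) (𝓝 (ω ^ 2 / 2)) := by
      apply tendsto_of_tendsto_of_tendsto_of_le_of_le' (g := fun _ => ω ^ 2 / 2)
        (h := fun ε => ω ^ 2 / 2 + ε * K)
      · exact tendsto_const_nhds
      · have h : Tendsto (fun ε : ℝ => ω ^ 2 / 2 + ε * K) (𝓝 0) (𝓝 (ω ^ 2 / 2 + 0 * K)) :=
          Tendsto.add tendsto_const_nhds (tendsto_id.mul tendsto_const_nhds)
        simp only [zero_mul, add_zero] at h
        exact h.mono_left nhdsWithin_le_nhds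
      · filter_upwards [hIoo] with ε hε
        exact (hspec ε hε).1.le
      · filter_upwards [hIoo] with ε hε
        exact (hspec ε hε).2.1
    have hFc : F (ω ^ 2 / 2) = Real.sqrt (2 * β ^ 2 - α ^ 2 * ω ^ 2) / ω := by
      rw [hF]
      simp only
      have h1 : (β ^ 2 - α ^ 2 * (ω ^ 2 / 2)) / (ω ^ 2 / 2)
          = (2 * β ^ 2 - α ^ 2 * ω ^ 2) / ω ^ 2 := by
        field_simp
      rw [h1, Real.sqrt_div (by nlinarith) (ω ^ 2), Real.sqrt_sq hω.le]
    have hFcont : ContinuousAt F (ω ^ 2 / 2) := by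
      rw [hF]
      apply Real.continuous_sqrt.continuousAt.comp
      exact ContinuousAt.div (by fun_prop) continuousAt_id (by rw [hc] at hc0; exact hc0.ne')
    have hcomp : Tendsto (fun ε => F (Ifun ε)) (𝓝[>] (0 : ℝ))
        (𝓝 (Real.sqrt (2 * β ^ 2 - α ^ 2 * ω ^ 2) / ω)) := by
      rw [← hFc]
      exact hFcont.tendsto.comp hIc_tendsto
    apply hcomp.congr'
    filter_upwards [hIoo] with ε hε
    exact ((hspec ε hε).2.2.2.2.2).symm
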